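/- Let P₁,…,P_k be holomorphic polynomials on ℂⁿ and let N be a nilpotent n×n complex matrix; let X denote the derivation on polynomials given by X(P)(z) = ∑_{j=1}^n (Nz)_j·∂P/∂z_j(z). If Re( ∑_{l=1}^k X(P_l)(z)·conj(P_l(z)) ) = 0 for all z ∈ ℂⁿ, then X(P_l) = 0 identically for every l = 1,…,k. -/

import Mathlib

open MvPolynomial

noncomputable section

/-- The derivation `X(P)(z) = ∑_j (Nz)_j · ∂P/∂z_j` on holomorphic polynomials on `ℂⁿ`,
associated to the linear vector field given by the matrix `N`. -/
def matDeriv {n : ℕ} (N : Matrix (Fin n) (Fin n) ℂ) (P : MvPolynomial (Fin n) ℂ) :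
    MvPolynomial (Fin n) ℂ :=
  ∑ j, (∑ k, C (N j k) * X k) * pderiv j P

namespace NilpAux

/-- Chain rule for substituting one-variable polynomials into a multivariate polynomial. -/
lemma deriv_aeval {n : ℕ} (f : Fin n → Polynomial ℂ) (P : MvPolynomial (Fin n) ℂ) :
    Polynomial.derivative ((MvPolynomial.aeval f) P)
      = ∑ j, Polynomial.derivative (f j) * (MvPolynomial.aeval f) (pderiv j P) := by
  induction P using MvPolynomial.induction_on with
  | C a => simp
  | add p q hp hq => simp [hp, hq, map_add, mul_add, Finset.sum_add_distrib]
  | mul_X p j hp =>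
      have step : ∀ i : Fin n,
          Polynomial.derivative (f i) * (MvPolynomial.aeval f) (pderiv i (p * X j))
            = Polynomial.derivative (f i) * ((MvPolynomial.aeval f) (pderiv i p) * f j)
              + (if i = j then Polynomial.derivative (f j) * (MvPolynomial.aeval f) p
                 else 0) := by
        intro i
        rw [pderiv_mul, pderiv_X, map_add, map_mul, map_mul, MvPolynomial.aeval_X]
        by_cases hij : i = j
        · subst hij
          simp only [Pi.single_eq_same, map_one, mul_one, if_true]
          ring
        · simp [Pi.single_apply, hij]
      rw [map_mul, MvPolynomial.aeval_X, Polynomial.derivative_mul, hp,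
        Finset.sum_congr rfl (fun i _ => step i), Finset.sum_add_distrib,
        Finset.sum_ite_eq' Finset.univ j
          (fun _ => Polynomial.derivative (f j) * (MvPolynomial.aeval f) p),
        if_pos (Finset.mem_univ j), Finset.sum_mul]
      refine congrArg₂ (· + ·) ?_ ?_
      · exact Finset.sum_congr rfl fun i _ => (mul_assoc _ _ _)
      · exact mul_comm _ _

/-- Evaluating an `aeval` substitution. -/
lemma eval_aeval {n : ℕ} (f : Fin n → Polynomial ℂ) (Q : MvPolynomial (Fin n) ℂ) (x : ℂ) :
    Polynomial.eval x ((MvPolynomial.aeval f) Q)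
      = MvPolynomial.eval (fun j => Polynomial.eval x (f j)) Q := by
  induction Q using MvPolynomial.induction_on with
  | C a => simp
  | add p q hp hq => simp [hp, hq]
  | mul_X p j hp => simp [hp]

lemma coeff_mul_conj {q : Polynomial ℂ} {d : ℕ} (hq : q.natDegree ≤ d) :
    (q * q.map (starRingEnd ℂ)).coeff (d + d) = q.coeff d * (starRingEnd ℂ) (q.coeff d) := by
  rw [Polynomial.coeff_mul]
  rw [Finset.sum_eq_single (d, d)]
  · simp
  · rintro ⟨i, j⟩ hmem hne
    rw [Finset.HasAntidiagonal.mem_antidiagonal] at hmem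
    have hij : d < i ∨ d < j := by
      by_contra hcon
      push_neg at hcon
      exact hne (by simp at hmem ⊢; omega)
    rcases hij with hi | hj
    · rw [Polynomial.coeff_eq_zero_of_natDegree_lt (lt_of_le_of_lt hq hi), zero_mul]
    · rw [Polynomial.coeff_map,
        Polynomial.coeff_eq_zero_of_natDegree_lt (lt_of_le_of_lt hq hj), map_zero, mul_zero]
  · intro hnot
    simp at hnot

/-- If a finite sum `∑ qₗ · conj(qₗ)` of one-variable polynomials is constant, then each `qₗ`
is constant. -/
lemma const_of_sum_sq {k : ℕ} : ∀ (m : ℕ) (q : Fin k → Polynomial ℂ) (c : ℂ),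
    (∑ l, q l * (q l).map (starRingEnd ℂ)) = Polynomial.C c →
    (∀ l, (q l).natDegree ≤ m) → ∀ l, (q l).natDegree = 0 := by
  intro m
  induction m with
  | zero => intro q c _ hdeg l; exact Nat.le_zero.mp (hdeg l)
  | succ m ih =>
    intro q c hsum hdeg
    have key : ∀ l, (q l).coeff (m + 1) = 0 := by
      have h1 : (Polynomial.C c).coeff ((m+1) + (m+1))
          = ∑ l, (q l).coeff (m+1) * (starRingEnd ℂ) ((q l).coeff (m+1)) := by
        rw [← hsum, Polynomial.finset_sum_coeff]
        exact Finset.sum_congr rfl fun l _ => coeff_mul_conj (hdeg l)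
      rw [Polynomial.coeff_C, if_neg (by omega)] at h1
      have h2 : (0 : ℝ) = ∑ l, Complex.normSq ((q l).coeff (m+1)) := by
        have := congrArg Complex.re h1
        simpa [Complex.mul_conj] using this
      intro l
      have hz : Complex.normSq ((q l).coeff (m+1)) = 0 :=
        (Finset.sum_eq_zero_iff_of_nonneg
          (fun i _ => Complex.normSq_nonneg ((q i).coeff (m+1)))).mp h2.symm l (Finset.mem_univ l)
      exact Complex.normSq_eq_zero.mp hz
    apply ih q c hsum
    intro l
    rw [Polynomial.natDegree_le_iff_coeff_eq_zero]
    intro D hD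
    rcases eq_or_lt_of_le (Nat.succ_le_of_lt hD) with hE | hL
    · rw [← hE]; exact key l
    · exact Polynomial.coeff_eq_zero_of_natDegree_lt (lt_of_le_of_lt (hdeg l) hL)

/-- The truncated exponential `E(t) = ∑_{i ≤ s} t^i N^i / i!` applied to `z`, coordinatewise,
as a polynomial in `t`. -/
def fpoly {n : ℕ} (N : Matrix (Fin n) (Fin n) ℂ) (z : Fin n → ℂ) (s : ℕ) (j : Fin n) :
    Polynomial ℂ :=
  ∑ i ∈ Finset.range (s + 1),
    Polynomial.C ((i.factorial : ℂ)⁻¹ * ((N ^ i).mulVec z j)) * Polynomial.X ^ i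

lemma deriv_fpoly {n : ℕ} (N : Matrix (Fin n) (Fin n) ℂ) (z : Fin n → ℂ) (s : ℕ)
    (hs : N ^ (s + 1) = 0) (j : Fin n) :
    Polynomial.derivative (fpoly N z s j) = ∑ m, Polynomial.C (N j m) * fpoly N z s m := by
  have key : ∀ i : ℕ, ∑ m, N j m * ((i.factorial : ℂ)⁻¹ * ((N ^ i).mulVec z m))
      = (i.factorial : ℂ)⁻¹ * ((N ^ (i+1)).mulVec z j) := by
    intro i
    rw [pow_succ', ← Matrix.mulVec_mulVec]
    simp only [Matrix.mulVec, dotProduct, Finset.mul_sum]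
    exact Finset.sum_congr rfl fun m _ => Finset.sum_congr rfl fun x _ => by ring
  have rhs : (∑ m, Polynomial.C (N j m) * fpoly N z s m)
      = ∑ i ∈ Finset.range (s + 1),
          Polynomial.C ((i.factorial : ℂ)⁻¹ * ((N ^ (i+1)).mulVec z j)) * Polynomial.X ^ i := by
    unfold fpoly
    simp_rw [Finset.mul_sum]
    rw [Finset.sum_comm]
    refine Finset.sum_congr rfl fun i _ => ?_
    rw [← key i, map_sum, Finset.sum_mul]
    exact Finset.sum_congr rfl fun m _ => by simp [map_mul]; ring
  rw [rhs, Finset.sum_range_succ, hs]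
  simp only [Matrix.zero_mulVec, Pi.zero_apply, mul_zero, map_zero, zero_mul, add_zero]
  unfold fpoly
  rw [map_sum]
  simp_rw [Polynomial.derivative_C_mul_X_pow]
  rw [Finset.sum_range_succ']
  simp only [Nat.cast_zero, mul_zero, map_zero, zero_mul, add_zero, Nat.add_sub_cancel]
  refine Finset.sum_congr rfl fun i _ => ?_
  congr 1
  have h1 : ((i+1).factorial : ℂ) = (i+1 : ℂ) * (i.factorial : ℂ) := by
    rw [Nat.factorial_succ]; push_cast; ring
  have h2 : ((i.factorial : ℂ)) ≠ 0 := Nat.cast_ne_zero.mpr (Nat.factorial_ne_zero i)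
  have h3 : ((i : ℂ) + 1) ≠ 0 := Nat.cast_add_one_ne_zero i
  rw [h1]
  push_cast
  field_simp

lemma fpoly_at_zero {n : ℕ} (N : Matrix (Fin n) (Fin n) ℂ) (z : Fin n → ℂ) (s : ℕ) (j : Fin n) :
    Polynomial.eval 0 (fpoly N z s j) = z j := by
  unfold fpoly
  rw [Polynomial.eval_finset_sum, Finset.sum_eq_single 0]
  · simp [Matrix.one_mulVec]
  · intro i _ hi
    simp [zero_pow hi]
  · simp

/-- `aeval` along the exponential curve intertwines `Polynomial.derivative` and `matDeriv`. -/
lemma deriv_aeval_matDeriv {n : ℕ} (N : Matrix (Fin n) (Fin n) ℂ) (z : Fin n → ℂ) (s : ℕ)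
    (hs : N ^ (s + 1) = 0) (P : MvPolynomial (Fin n) ℂ) :
    Polynomial.derivative ((MvPolynomial.aeval (fpoly N z s)) P)
      = (MvPolynomial.aeval (fpoly N z s)) (matDeriv N P) := by
  rw [deriv_aeval, matDeriv, map_sum]
  refine Finset.sum_congr rfl fun j _ => ?_
  rw [map_mul, deriv_fpoly N z s hs j]
  congr 1
  rw [map_sum]
  refine Finset.sum_congr rfl fun m _ => ?_
  rw [map_mul, MvPolynomial.aeval_X, MvPolynomial.aeval_C]
  rfl

lemma eval_map_conj (p : Polynomial ℂ) (t : ℝ) :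
    Polynomial.eval (t : ℂ) (p.map (starRingEnd ℂ))
      = (starRingEnd ℂ) (Polynomial.eval (t : ℂ) p) := by
  have h : ((starRingEnd ℂ) (t : ℂ)) = (t : ℂ) := Complex.conj_ofReal t
  rw [← h, Polynomial.eval_map]
  simp [Polynomial.eval₂_eq_sum_range, Polynomial.eval_eq_sum_range, map_sum, map_mul, map_pow]

end NilpAux

/-- if `N` is nilpotent and `Re (∑_l X(P_l)(z) · conj (P_l(z))) = 0` for all
`z ∈ ℂⁿ`, then `X(P_l) = 0` identically for every `l`. -/
theorem nilpotent_derivation_sum_of_squares {n k : ℕ}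
    (P : Fin k → MvPolynomial (Fin n) ℂ)
    (N : Matrix (Fin n) (Fin n) ℂ) (hN : IsNilpotent N)
    (h : ∀ z : Fin n → ℂ,
      (∑ l, eval z (matDeriv N (P l)) * (starRingEnd ℂ) (eval z (P l))).re = 0) :
    ∀ l, matDeriv N (P l) = 0 := by
  intro l
  obtain ⟨s, hs0⟩ := hN
  have hs : N ^ (s + 1) = 0 := by rw [pow_succ, hs0, zero_mul]
  apply MvPolynomial.funext
  intro z
  rw [map_zero]
  set f : Fin n → Polynomial ℂ := NilpAux.fpoly N z s with hf
  set q : Fin k → Polynomial ℂ := fun l' => (MvPolynomial.aeval f) (P l') with hq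
  set R : Polynomial ℂ := ∑ l', q l' * (q l').map (starRingEnd ℂ) with hR
  have hder : Polynomial.derivative R
      = ∑ l', ((MvPolynomial.aeval f) (matDeriv N (P l')) * (q l').map (starRingEnd ℂ)
          + q l' * ((MvPolynomial.aeval f) (matDeriv N (P l'))).map (starRingEnd ℂ)) := by
    rw [hR, map_sum]
    refine Finset.sum_congr rfl fun l' _ => ?_
    simp only [hq, hf]
    rw [Polynomial.derivative_mul, Polynomial.derivative_map,
      NilpAux.deriv_aeval_matDeriv N z s hs]
  have hroots : ∀ t : ℝ, Polynomial.eval (t : ℂ) (Polynomial.derivative R) = 0 := by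
    intro t
    set c : Fin n → ℂ := fun j => Polynomial.eval (t : ℂ) (f j) with hc
    have hAB : ∀ Q : MvPolynomial (Fin n) ℂ,
        Polynomial.eval (t : ℂ) ((MvPolynomial.aeval f) Q) = MvPolynomial.eval c Q := by
      intro Q; rw [NilpAux.eval_aeval]
    rw [hder, Polynomial.eval_finset_sum]
    have hterm : ∀ l' : Fin k,
        Polynomial.eval (t : ℂ)
          ((MvPolynomial.aeval f) (matDeriv N (P l')) * (q l').map (starRingEnd ℂ)
            + q l' * ((MvPolynomial.aeval f) (matDeriv N (P l'))).map (starRingEnd ℂ))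
          = MvPolynomial.eval c (matDeriv N (P l'))
              * (starRingEnd ℂ) (MvPolynomial.eval c (P l'))
            + (starRingEnd ℂ) (MvPolynomial.eval c (matDeriv N (P l'))
              * (starRingEnd ℂ) (MvPolynomial.eval c (P l'))) := by
      intro l'
      rw [Polynomial.eval_add, Polynomial.eval_mul, Polynomial.eval_mul,
        NilpAux.eval_map_conj, NilpAux.eval_map_conj, hAB, hAB]
      rw [map_mul, Complex.conj_conj]
      ring
    rw [Finset.sum_congr rfl fun l' _ => hterm l', Finset.sum_add_distrib, ← map_sum]
    rw [Complex.add_conj]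
    norm_cast
    simp [h c]
  have hRder0 : Polynomial.derivative R = 0 := by
    apply Polynomial.eq_zero_of_infinite_isRoot
    apply Set.Infinite.mono _ (Set.infinite_range_of_injective Complex.ofReal_injective)
    rintro x ⟨t, rfl⟩
    exact hroots t
  have hRC : R = Polynomial.C (R.coeff 0) :=
    Polynomial.eq_C_of_natDegree_eq_zero
      (Polynomial.natDegree_eq_zero_of_derivative_eq_zero hRder0)
  have hq0 : ∀ l', (q l').natDegree = 0 :=
    NilpAux.const_of_sum_sq (Finset.univ.sup fun l' => (q l').natDegree) q (R.coeff 0)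
      (by rw [← hR]; exact hRC)
      (fun l' => Finset.le_sup (f := fun l' => (q l').natDegree) (Finset.mem_univ l'))
  have hql : (MvPolynomial.aeval f) (matDeriv N (P l)) = 0 := by
    rw [← NilpAux.deriv_aeval_matDeriv N z s hs]
    have hcl : q l = Polynomial.C ((q l).coeff 0) := Polynomial.eq_C_of_natDegree_eq_zero (hq0 l)
    simp only [hq, hf] at hcl
    rw [hcl]
    simp
  have hc0 : (fun j => Polynomial.eval 0 (f j)) = z := funext (NilpAux.fpoly_at_zero N z s)
  calc MvPolynomial.eval z (matDeriv N (P l))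
      = Polynomial.eval 0 ((MvPolynomial.aeval f) (matDeriv N (P l))) := by
        rw [NilpAux.eval_aeval, hc0]
    _ = 0 := by rw [hql, Polynomial.eval_zero]
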